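/- For all integers n ≥ 1 and r with 0 ≤ r ≤ 2n, the integer ∑_{i=0}^{min(n, 2n−r)} (−1)^i · binom(n,i) · binom(2n−i, r) equals 0 if 0 ≤ r ≤ n−1, and equals binom(n, r−n) if n ≤ r ≤ 2n. -/
import Mathlib


open Finset

open Polynomial in
theorem stmt_10 (n r : ℕ) (hn : 1 ≤ n) (hr : r ≤ 2 * n) :
    (∑ i ∈ Finset.range (min n (2 * n - r) + 1),
        (-1 : ℤ) ^ i * (n.choose i : ℤ) * ((2 * n - i).choose r : ℤ))
      = if r < n then 0 else (n.choose (r - n) : ℤ) := by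
  have hsum : (∑ i ∈ Finset.range (min n (2 * n - r) + 1),
      (-1 : ℤ) ^ i * (n.choose i : ℤ) * ((2 * n - i).choose r : ℤ))
      = ∑ i ∈ Finset.range (n + 1),
        (-1 : ℤ) ^ i * (n.choose i : ℤ) * ((2 * n - i).choose r : ℤ) := by
    apply Finset.sum_subset
    · intro x hx
      simp only [mem_range] at *
      omega
    · intro x hx hx'
      simp only [mem_range] at *
      have h2 : 2 * n - x < r := by omega
      rw [Nat.choose_eq_zero_of_lt h2]
      simp
  rw [hsum]
  -- polynomial identity
  have hXpow : (X : ℤ[X]) ^ n = ∑ k ∈ Finset.range (n + 1),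
      (-1 : ℤ[X]) ^ k * (X + 1) ^ (n - k) * (n.choose k : ℤ[X]) := by
    have h := add_pow (-1 : ℤ[X]) (X + 1) n
    have hx : (-1 : ℤ[X]) + (X + 1) = X := by ring
    rw [hx] at h
    exact h
  have hmain : ((X + 1 : ℤ[X]) ^ n * X ^ n)
      = ∑ k ∈ Finset.range (n + 1),
        C ((-1 : ℤ) ^ k * (n.choose k : ℤ)) * (X + 1) ^ (2 * n - k) := by
    rw [hXpow, Finset.mul_sum]
    apply Finset.sum_congr rfl
    intro k hk
    simp only [mem_range] at hk
    have hek : 2 * n - k = n + (n - k) := by omega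
    rw [hek, pow_add, map_mul, map_pow, map_neg, map_one, Polynomial.C_eq_natCast]
    push_cast
    ring
  have hcoeff : ((X + 1 : ℤ[X]) ^ n * X ^ n).coeff r
      = ∑ i ∈ Finset.range (n + 1),
        (-1 : ℤ) ^ i * (n.choose i : ℤ) * ((2 * n - i).choose r : ℤ) := by
    rw [hmain, Polynomial.finset_sum_coeff]
    apply Finset.sum_congr rfl
    intro k _
    rw [Polynomial.coeff_C_mul, Polynomial.coeff_X_add_one_pow]
  rw [← hcoeff, Polynomial.coeff_mul_X_pow']
  split_ifs with h1 h2 h2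
  · omega
  · rw [Polynomial.coeff_X_add_one_pow]
  · rfl
  · omega
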